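/- Let P = {x₁, …, x_μ} with μ ≥ 3 be a population consisting only of Pareto-optimal points of LOTZ (i.e. points of the form 1^j 0^{n−j}), sorted so that f₁(x₁) < ⋯ < f₁(x_μ). If the hypervolume contribution is computed with a reference point (r₁, r₂) with r₁ ≤ −n² and r₂ ≤ −n², then HVC(x_i, P) ≤ n²/4 < n² ≤ min{HVC(x₁, P), HVC(x_μ, P)} for every 1 < i < μ; likewise CDC assigns infinite value exactly to x₁ and x_μ. Consequently, the Highest Diversity Contribution selection with either measure always selects a parent with minimum or maximum number of ones in P. -/

import Mathlib

noncomputable section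
open scoped ENNReal
attribute [local instance] Classical.propDecidable

namespace EMO


/-- A bit string of length `n`. -/
abbrev BitString (n : ℕ) := Fin n → Bool

/-- Number of one-bits. -/
def onesCount {n : ℕ} (x : BitString n) : ℕ :=
  (Finset.univ.filter fun i => x i = true).card

def allOnes (n : ℕ) : BitString n := fun _ => true
def allZeros (n : ℕ) : BitString n := fun _ => false

/-- The bi-objective function OneMinMax. -/
def OneMinMax {n : ℕ} (x : BitString n) : ℤ × ℤ :=
  ((onesCount x : ℤ), (n : ℤ) - (onesCount x : ℤ))

/-- Number of leading ones. -/
def leadingOnes {n : ℕ} (x : BitString n) : ℕ :=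
  (Finset.univ.filter fun i : Fin n => ∀ j : Fin n, j ≤ i → x j = true).card

/-- Number of trailing zeros. -/
def trailingZeros {n : ℕ} (x : BitString n) : ℕ :=
  (Finset.univ.filter fun i : Fin n => ∀ j : Fin n, i ≤ j → x j = false).card

/-- The bi-objective function LOTZ. -/
def LOTZ {n : ℕ} (x : BitString n) : ℤ × ℤ :=
  ((leadingOnes x : ℤ), (trailingZeros x : ℤ))

/-- `y` dominates `x` (maximisation). -/
def dominates {n : ℕ} (f : BitString n → ℤ × ℤ) (y x : BitString n) : Prop :=
  (f x).1 ≤ (f y).1 ∧ (f x).2 ≤ (f y).2 ∧ f x ≠ f y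

/-- `y` weakly dominates `x` (maximisation). -/
def weaklyDominates {n : ℕ} (f : BitString n → ℤ × ℤ) (y x : BitString n) : Prop :=
  (f x).1 ≤ (f y).1 ∧ (f x).2 ≤ (f y).2

/-- Pareto optimality. -/
def paretoOptimal {n : ℕ} (f : BitString n → ℤ × ℤ) (x : BitString n) : Prop :=
  ¬ ∃ y : BitString n, dominates f y x

/-- A population of mutually non-dominated points. -/
def mutuallyNonDominated {n : ℕ} (f : BitString n → ℤ × ℤ)
    (P : Finset (BitString n)) : Prop :=
  ∀ x ∈ P, ∀ y ∈ P, ¬ dominates f y x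

/-- Flip bit `i` of `x`. -/
def flipBit {n : ℕ} (x : BitString n) (i : Fin n) : BitString n :=
  Function.update x i (!x i)

/-- `y` is a Hamming neighbour of `x`. -/
def hammingNeighbour {n : ℕ} (x y : BitString n) : Prop :=
  ∃ i : Fin n, y = flipBit x i

/-- `x` is good relative to population `P`: it is Pareto optimal and has a Pareto-optimal
Hamming neighbour whose objective vector is not attained by any member of `P`. -/
def isGood {n : ℕ} (f : BitString n → ℤ × ℤ) (P : Finset (BitString n))
    (x : BitString n) : Prop :=
  paretoOptimal f x ∧
    ∃ y : BitString n, hammingNeighbour x y ∧ paretoOptimal f y ∧ ∀ z ∈ P, f z ≠ f y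

/-- `x` is bad relative to population `P`. -/
def isBad {n : ℕ} (f : BitString n → ℤ × ℤ) (P : Finset (BitString n))
    (x : BitString n) : Prop :=
  paretoOptimal f x ∧
    ¬ ∃ y : BitString n, hammingNeighbour x y ∧ paretoOptimal f y ∧ ∀ z ∈ P, f z ≠ f y

/-- `P` covers the whole Pareto front of `f`. -/
def coversFront {n : ℕ} (f : BitString n → ℤ × ℤ) (P : Finset (BitString n)) : Prop :=
  ∀ x : BitString n, paretoOptimal f x → ∃ z ∈ P, f z = f x

/-- The hypervolume contribution of `x` to `P` (for a population of mutually
non-dominated points, with reference point `r`). -/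
def HVC {n : ℕ} (f : BitString n → ℤ × ℤ) (r : ℤ × ℤ) (x : BitString n)
    (P : Finset (BitString n)) : ℤ :=
  ((f x).1 - (((P.filter fun z => (f z).1 < (f x).1).image fun z => (f z).1).max.unbotD r.1)) *
  ((f x).2 - (((P.filter fun z => (f z).2 < (f x).2).image fun z => (f z).2).max.unbotD r.2))

/-- Crowding distance of `x` in `P` with respect to a single objective `g`: infinite for the
boundary points, and otherwise the normalised difference between successor and predecessor. -/
def CDCobj {n : ℕ} (g : BitString n → ℤ) (x : BitString n)
    (P : Finset (BitString n)) : ℝ≥0∞ :=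
  if (∀ z ∈ P, g x ≤ g z) ∨ (∀ z ∈ P, g z ≤ g x) then ⊤
  else
    (((((P.filter fun z => g x < g z).image g).min.untopD 0 -
        (((P.filter fun z => g z < g x).image g).max.unbotD 0)).toNat : ℝ≥0∞)) /
      ((((P.image g).max.unbotD 0 - ((P.image g).min.untopD 0)).toNat : ℝ≥0∞))

/-- The crowding distance contribution of `x` to `P`. -/
def CDC {n : ℕ} (f : BitString n → ℤ × ℤ) (x : BitString n)
    (P : Finset (BitString n)) : ℝ≥0∞ :=
  CDCobj (fun z => (f z).1) x P + CDCobj (fun z => (f z).2) x P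

/-- A diversity measure `c` is diversity-favouring on `S`. -/
def diversityFavouring {n : ℕ} {α : Type*} [Preorder α] (f : BitString n → ℤ × ℤ)
    (c : BitString n → Finset (BitString n) → α) (S : Set (BitString n)) : Prop :=
  ∀ P : Finset (BitString n), mutuallyNonDominated f P →
    ∀ x ∈ P, ∀ y ∈ P, x ∈ S → y ∈ S → isBad f P x → isGood f P y → c x P < c y P

/-- The default bit string (used only to make selection kernels total). -/
def defaultBS (n : ℕ) : BitString n := fun _ => false

/-- Local mutation: flip a single uniformly random bit. -/
def localMutation {n : ℕ} (hn : 0 < n) (x : BitString n) : PMF (BitString n) :=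
  haveI : Nonempty (Fin n) := ⟨⟨0, hn⟩⟩
  (PMF.uniformOfFintype (Fin n)).map (flipBit x)

/-- A Bernoulli coin with success probability `1/n` (for `n ≥ 1`). -/
def bitFlipCoin (n : ℕ) : PMF Bool :=
  PMF.ofFintype (fun b => cond b (min ((n : ℝ≥0∞))⁻¹ 1) (1 - min ((n : ℝ≥0∞))⁻¹ 1))
    (by simp [Fintype.sum_bool, add_tsub_cancel_of_le (min_le_right _ _)])

/-- Global (standard bit) mutation: flip each bit independently with probability `1/n`. -/
def globalMutationAux {n : ℕ} : List (Fin n) → BitString n → PMF (BitString n)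
  | [], x => PMF.pure x
  | i :: is, x => (bitFlipCoin n).bind fun b =>
      globalMutationAux is (if b then flipBit x i else x)

def globalMutation {n : ℕ} (x : BitString n) : PMF (BitString n) :=
  globalMutationAux (List.finRange n) x

/-- Survival selection: if `s'` is not dominated by any member of `P`, add `s'` to `P` and
remove all members weakly dominated by `s'`. -/
def updatePop {n : ℕ} (f : BitString n → ℤ × ℤ) (P : Finset (BitString n))
    (s' : BitString n) : Finset (BitString n) :=
  if ∃ z ∈ P, dominates f z s' then P
  else insert s' (P.filter fun z => ¬ weaklyDominates f s' z)

/-- One iteration of (G)SEMO with parent-selection kernel `select` and mutation `mutate`. -/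
def step {n : ℕ} (f : BitString n → ℤ × ℤ)
    (select : Finset (BitString n) → PMF (BitString n))
    (mutate : BitString n → PMF (BitString n))
    (P : Finset (BitString n)) : PMF (Finset (BitString n)) :=
  (select P).bind fun s => (mutate s).map fun s' => updatePop f P s'

/-- The L-dominant attribute `L(x) = LO(x) + TZ(x)`. -/
def Ldom {n : ℕ} (x : BitString n) : ℕ := leadingOnes x + trailingZeros x

/-- The subpopulation of points with maximum L-dominant attribute. -/
def maxLSub {n : ℕ} (P : Finset (BitString n)) : Finset (BitString n) :=
  P.filter fun x => ∀ z ∈ P, Ldom z ≤ Ldom x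

/-- One iteration of the modified GSEMO: parent selection (and the diversity contribution)
is restricted to the subpopulation of points with maximum L-dominant attribute. -/
def stepMod {n : ℕ} (f : BitString n → ℤ × ℤ)
    (select : Finset (BitString n) → PMF (BitString n))
    (mutate : BitString n → PMF (BitString n))
    (P : Finset (BitString n)) : PMF (Finset (BitString n)) :=
  (select (maxLSub P)).bind fun s => (mutate s).map fun s' => updatePop f P s'

/-- Initial population: a single uniformly random bit string. -/
def initDist (n : ℕ) : PMF (Finset (BitString n)) :=
  (PMF.uniformOfFintype (BitString n)).map fun x => {x}

/-- Distribution of the population after `t` iterations. -/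
def stateDist {S : Type*} (init : PMF S) (st : S → PMF S) : ℕ → PMF S
  | 0 => init
  | t + 1 => (stateDist init st t).bind st

/-- Expected number of iterations until an (absorbing) goal predicate is reached,
expressed as `∑ₜ Pr[goal not yet reached at time t]`. -/
def expectedRuntime {S : Type*} (init : PMF S) (st : S → PMF S) (goal : S → Prop) : ℝ≥0∞ :=
  ∑' t : ℕ, (stateDist init st t).toOuterMeasure {s | ¬ goal s}

/-- Uniform parent selection. -/
def uniformSelect {n : ℕ} (P : Finset (BitString n)) : PMF (BitString n) :=
  if h : P.Nonempty then PMF.uniformOfFinset P h else PMF.pure (defaultBS n)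

/-- Highest Diversity Contribution (HDC) parent selection: select an individual with
maximum diversity contribution, ties broken uniformly at random. -/
def HDCSelect {n : ℕ} {α : Type*} [LinearOrder α]
    (c : BitString n → Finset (BitString n) → α)
    (P : Finset (BitString n)) : PMF (BitString n) :=
  if h : P.Nonempty then
    PMF.uniformOfFinset (P.filter fun x => ∀ y ∈ P, c y P ≤ c x P)
      (by
        obtain ⟨b, hb, hmax⟩ := P.exists_max_image (fun x => c x P) h
        exact ⟨b, Finset.mem_filter.mpr ⟨hb, hmax⟩⟩)
  else PMF.pure (defaultBS n)

/-- Non-Minimum Uniform at Random (NMUAR) parent selection: select uniformly at random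
among all individuals whose diversity contribution is not minimal (from the whole
population if all contributions are equal). -/
def NMUARSelect {n : ℕ} {α : Type*} [LinearOrder α]
    (c : BitString n → Finset (BitString n) → α)
    (P : Finset (BitString n)) : PMF (BitString n) :=
  if h : P.Nonempty then
    if hQ : (P.filter fun x => ∃ y ∈ P, c y P < c x P).Nonempty then
      PMF.uniformOfFinset _ hQ
    else PMF.uniformOfFinset P h
  else PMF.pure (defaultBS n)

/-- Tournament selection with tournament size `μ = |P|`: draw `μ` individuals uniformly at
random with replacement from `P` and select one with the highest diversity contribution
among the drawn multiset (ties broken uniformly at random). -/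
def tournamentSelect {n : ℕ} {α : Type*} [LinearOrder α]
    (c : BitString n → Finset (BitString n) → α)
    (P : Finset (BitString n)) : PMF (BitString n) :=
  if h : P.Nonempty then
    haveI : Nonempty {x // x ∈ P} := h.to_subtype
    (PMF.uniformOfFintype (Fin P.card → {x // x ∈ P})).bind fun g =>
      PMF.uniformOfFinset
        ((Finset.univ.image fun i => ((g i : {x // x ∈ P}) : BitString n)).filter fun x =>
          ∀ y ∈ Finset.univ.image fun i => ((g i : {x // x ∈ P}) : BitString n), c y P ≤ c x P)
        (by
          have hne : (Finset.univ.image fun i => ((g i : {x // x ∈ P}) : BitString n)).Nonempty := by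
            refine ⟨(g ⟨0, Finset.card_pos.mpr h⟩ : {x // x ∈ P}), ?_⟩
            exact Finset.mem_image.mpr ⟨⟨0, Finset.card_pos.mpr h⟩, Finset.mem_univ _, rfl⟩
          obtain ⟨b, hb, hmax⟩ :=
            Finset.exists_max_image _ (fun x => c x P) hne
          exact ⟨b, Finset.mem_filter.mpr ⟨hb, hmax⟩⟩)
  else PMF.pure (defaultBS n)

/-- Exponential ranking scheme: probability of selecting the `i`-th ranked individual
(1-indexed) in a population of size `μ`. -/
def rExp (i μ : ℕ) : ℝ≥0∞ :=
  (2 : ℝ≥0∞)⁻¹ ^ i / ∑ j ∈ Finset.Icc 1 μ, (2 : ℝ≥0∞)⁻¹ ^ j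

/-- Power-law ranking scheme. -/
def rPow (i μ : ℕ) : ℝ≥0∞ :=
  ((i : ℝ≥0∞) ^ 2)⁻¹ / ∑ j ∈ Finset.Icc 1 μ, ((j : ℝ≥0∞) ^ 2)⁻¹

/-- Harmonic ranking scheme. -/
def rHarm (i μ : ℕ) : ℝ≥0∞ :=
  (i : ℝ≥0∞)⁻¹ / ∑ j ∈ Finset.Icc 1 μ, (j : ℝ≥0∞)⁻¹


/-- `select` implements a rank-based parent-selection scheme with rank probabilities
`r i μ` (1-indexed rank `i`, population size `μ`) with respect to the diversity
contribution `c`, for some non-increasing ordering of the population by `c`. -/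
def implementsRankScheme {n : ℕ} {α : Type*} [Preorder α]
    (c : BitString n → Finset (BitString n) → α) (r : ℕ → ℕ → ℝ≥0∞)
    (select : Finset (BitString n) → PMF (BitString n)) : Prop :=
  ∀ P : Finset (BitString n), P.Nonempty →
    ∃ l : List (BitString n), l.Nodup ∧ l.toFinset = P ∧
      l.Chain' (fun a b => c b P ≤ c a P) ∧
      (∀ i : Fin l.length, select P (l.get i) = r (i.val + 1) P.card) ∧
      (∀ x : BitString n, x ∉ P → select P x = 0)

/-- The Pareto-optimal point `1^i 0^(n-i)` of LOTZ. -/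
def opt (n i : ℕ) : BitString n := fun t => decide ((t : ℕ) < i)

/-- The whole Pareto set of LOTZ as a population. -/
def frontSet (n : ℕ) : Finset (BitString n) := (Finset.range (n + 1)).image (opt n)

/-- `P` has a gap at position `i`. -/
def hasGapAt {n : ℕ} (P : Finset (BitString n)) (i : ℕ) : Prop :=
  opt n i ∉ P ∧ (∃ j, j < i ∧ opt n j ∈ P) ∧ (∃ k, i < k ∧ k ≤ n ∧ opt n k ∈ P)

/-- `P` has a gap at some position `i` with `n/4 ≤ i ≤ 3n/4`. -/
def gapInRange (n : ℕ) (P : Finset (BitString n)) : Prop :=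
  ∃ i : ℕ, n ≤ 4 * i ∧ 4 * i ≤ 3 * n ∧ hasGapAt P i

/-- `P` contains both `0^n` and `1^n`. -/
def bothExtremes (n : ℕ) (P : Finset (BitString n)) : Prop :=
  allZeros n ∈ P ∧ allOnes n ∈ P

/-- The chain stopped (frozen) as soon as `cond` holds. -/
def stopWhen {S : Type*} (cond : S → Prop) (st : S → PMF S) (s : S) : PMF S :=
  if cond s then PMF.pure s else st s


section Aux
variable {n : ℕ}

lemma LO_le (x : BitString n) : leadingOnes x ≤ n := by
  rw [leadingOnes]
  exact le_trans (Finset.card_le_univ _) (by simp)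

lemma TZ_le (x : BitString n) : trailingZeros x ≤ n := by
  rw [trailingZeros]
  exact le_trans (Finset.card_le_univ _) (by simp)

lemma LO_char (x : BitString n) (i : Fin n) :
    (i : ℕ) < leadingOnes x ↔ ∀ j : Fin n, j ≤ i → x j = true := by
  set S := Finset.univ.filter fun i : Fin n => ∀ j : Fin n, j ≤ i → x j = true with hS
  have hLO : leadingOnes x = S.card := rfl
  constructor
  · intro h
    by_contra hiS
    have hsub : S ⊆ Finset.Iio i := by
      intro k hk
      simp only [hS, Finset.mem_filter, Finset.mem_univ, true_and] at hk
      by_contra hki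
      simp only [Finset.mem_Iio, not_lt] at hki
      exact hiS fun j hj => hk j (le_trans hj hki)
    have := Finset.card_le_card hsub
    rw [Fin.card_Iio] at this
    omega
  · intro h
    have hsub : Finset.Iic i ⊆ S := by
      intro k hk
      simp only [Finset.mem_Iic] at hk
      simp only [hS, Finset.mem_filter, Finset.mem_univ, true_and]
      exact fun j hj => h j (le_trans hj hk)
    have := Finset.card_le_card hsub
    rw [Fin.card_Iic] at this
    omega

lemma LO_true (x : BitString n) (i : Fin n) (h : (i : ℕ) < leadingOnes x) :
    x i = true := (LO_char x i).mp h i le_rfl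

lemma TZ_char (x : BitString n) (i : Fin n) :
    n - trailingZeros x ≤ (i : ℕ) ↔ ∀ j : Fin n, i ≤ j → x j = false := by
  set S := Finset.univ.filter fun i : Fin n => ∀ j : Fin n, i ≤ j → x j = false with hS
  have hTZ : trailingZeros x = S.card := rfl
  have hTZle : trailingZeros x ≤ n := TZ_le x
  have hin : (i : ℕ) < n := i.isLt
  constructor
  · intro h
    by_contra hiS
    have hsub : S ⊆ Finset.Ioi i := by
      intro k hk
      simp only [hS, Finset.mem_filter, Finset.mem_univ, true_and] at hk
      by_contra hki
      simp only [Finset.mem_Ioi, not_lt] at hki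
      exact hiS fun j hj => hk j (le_trans hki hj)
    have := Finset.card_le_card hsub
    rw [Fin.card_Ioi] at this
    omega
  · intro h
    have hsub : Finset.Ici i ⊆ S := by
      intro k hk
      simp only [Finset.mem_Ici] at hk
      simp only [hS, Finset.mem_filter, Finset.mem_univ, true_and]
      exact fun j hj => h j (le_trans hk hj)
    have := Finset.card_le_card hsub
    rw [Fin.card_Ici] at this
    omega

lemma TZ_false (x : BitString n) (i : Fin n) (h : n - trailingZeros x ≤ (i : ℕ)) :
    x i = false := (TZ_char x i).mp h i le_rfl

lemma LO_add_TZ_le (x : BitString n) : leadingOnes x + trailingZeros x ≤ n := by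
  by_contra h
  push_neg at h
  have hT : 1 ≤ trailingZeros x := by have := LO_le x; omega
  have hn : n - trailingZeros x < n := by have := TZ_le x; omega
  have h1 : x ⟨n - trailingZeros x, hn⟩ = true := by
    apply LO_true
    show n - trailingZeros x < leadingOnes x
    have := TZ_le x
    omega
  have h2 : x ⟨n - trailingZeros x, hn⟩ = false := TZ_false x _ le_rfl
  simp [h1] at h2

lemma card_filter_lt (j : ℕ) (hj : j ≤ n) :
    (Finset.univ.filter fun i : Fin n => (i : ℕ) < j).card = j := by
  rcases lt_or_eq_of_le hj with hlt | heq
  · have he : (Finset.univ.filter fun i : Fin n => (i : ℕ) < j) = Finset.Iio (⟨j, hlt⟩ : Fin n) := by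
      ext k; simp [Fin.lt_def]
    rw [he, Fin.card_Iio]
  · subst heq
    have he : (Finset.univ.filter fun i : Fin j => (i : ℕ) < j) = Finset.univ := by
      ext k; simp [k.isLt]
    rw [he, Finset.card_univ, Fintype.card_fin]

lemma card_filter_ge (j : ℕ) (hj : j ≤ n) :
    (Finset.univ.filter fun i : Fin n => j ≤ (i : ℕ)).card = n - j := by
  rcases lt_or_eq_of_le hj with hlt | heq
  · have he : (Finset.univ.filter fun i : Fin n => j ≤ (i : ℕ)) = Finset.Ici (⟨j, hlt⟩ : Fin n) := by
      ext k; simp [Fin.le_def]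
    rw [he, Fin.card_Ici]
  · subst heq
    have he : (Finset.univ.filter fun i : Fin j => j ≤ (i : ℕ)) = ∅ := by
      ext k; simp [Nat.not_le.mpr k.isLt]
    rw [he, Finset.card_empty, Nat.sub_self]

lemma LO_opt (j : ℕ) (hj : j ≤ n) : leadingOnes (opt n j) = j := by
  have hfe : (Finset.univ.filter fun i : Fin n => ∀ j' : Fin n, j' ≤ i → opt n j j' = true)
      = Finset.univ.filter fun i : Fin n => (i : ℕ) < j := by
    apply Finset.filter_congr
    intro i _
    simp only [opt, decide_eq_true_eq]
    constructor
    · intro h; exact h i le_rfl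
    · intro h j' hj'; exact lt_of_le_of_lt hj' h
  rw [leadingOnes, hfe, card_filter_lt _ hj]

lemma TZ_opt (j : ℕ) (hj : j ≤ n) : trailingZeros (opt n j) = n - j := by
  have hfe : (Finset.univ.filter fun i : Fin n => ∀ j' : Fin n, i ≤ j' → opt n j j' = false)
      = Finset.univ.filter fun i : Fin n => j ≤ (i : ℕ) := by
    apply Finset.filter_congr
    intro i _
    simp only [opt, decide_eq_false_iff_not, not_lt]
    constructor
    · intro h; exact h i le_rfl
    · intro h j' hj'; exact le_trans h hj'
  rw [trailingZeros, hfe, card_filter_ge _ hj]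

lemma pareto_sum {x : BitString n} (hx : paretoOptimal LOTZ x) :
    leadingOnes x + trailingZeros x = n := by
  by_contra h
  have hlt : leadingOnes x + trailingZeros x < n :=
    lt_of_le_of_ne (LO_add_TZ_le x) h
  have hLO : leadingOnes x + 1 ≤ n := by omega
  apply hx
  refine ⟨opt n (leadingOnes x + 1), ?_, ?_, ?_⟩
  · simp only [LOTZ, LO_opt _ hLO]
    push_cast; omega
  · simp only [LOTZ, TZ_opt _ hLO]
    omega
  · intro hc
    have := congrArg Prod.fst hc
    simp only [LOTZ, LO_opt _ hLO] at this
    have : leadingOnes x = leadingOnes x + 1 := by exact_mod_cast this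
    omega

lemma pareto_bits {x : BitString n} (hx : paretoOptimal LOTZ x) (i : Fin n) :
    x i = true ↔ (i : ℕ) < leadingOnes x := by
  constructor
  · intro h
    by_contra hge
    push_neg at hge
    have : n - trailingZeros x ≤ (i : ℕ) := by
      have := pareto_sum hx; omega
    rw [TZ_false x i this] at h
    exact Bool.false_ne_true h
  · exact LO_true x i

lemma pareto_onesCount {x : BitString n} (hx : paretoOptimal LOTZ x) :
    onesCount x = leadingOnes x := by
  have : (Finset.univ.filter fun i : Fin n => x i = true)
      = Finset.univ.filter fun i : Fin n => (i : ℕ) < leadingOnes x := by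
    apply Finset.filter_congr
    intro i _
    exact pareto_bits hx i
  rw [onesCount, this]
  exact card_filter_lt _ (LO_le x)

lemma pareto_inj {x y : BitString n} (hx : paretoOptimal LOTZ x)
    (hy : paretoOptimal LOTZ y) (h : leadingOnes x = leadingOnes y) : x = y := by
  funext i
  have h1 := pareto_bits hx i
  have h2 := pareto_bits hy i
  rw [h] at h1
  set_option linter.unnecessarySeqFocus false in
  cases hxi : x i <;> cases hyi : y i <;> simp_all <;> omega

end Aux

/-- For a population `P` (|P| ≥ 3) of Pareto-optimal points of LOTZ and a
reference point dominated by `(−n², −n²)`: every non-extreme point has hypervolume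
contribution at most `n²/4 < n²`, every extreme point (minimum or maximum `f₁`-value)
has hypervolume contribution at least `n²`, CDC is infinite exactly on the two extreme
points, and consequently Highest Diversity Contribution selection (with either measure)
always selects a parent with minimum or maximum number of ones in `P`. -/
theorem hdc_selects_extremes (n : ℕ) (P : Finset (BitString n)) (hcard : 3 ≤ P.card)
    (hpar : ∀ x ∈ P, paretoOptimal LOTZ x)
    (r : ℤ × ℤ) (hr1 : r.1 ≤ -(n : ℤ) ^ 2) (hr2 : r.2 ≤ -(n : ℤ) ^ 2) :
    (∀ x ∈ P, (∃ y ∈ P, (LOTZ y).1 < (LOTZ x).1) → (∃ y ∈ P, (LOTZ x).1 < (LOTZ y).1) →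
      4 * HVC LOTZ r x P ≤ (n : ℤ) ^ 2 ∧ HVC LOTZ r x P < (n : ℤ) ^ 2) ∧
    (∀ x ∈ P, ((∀ y ∈ P, (LOTZ x).1 ≤ (LOTZ y).1) ∨ (∀ y ∈ P, (LOTZ y).1 ≤ (LOTZ x).1)) →
      (n : ℤ) ^ 2 ≤ HVC LOTZ r x P) ∧
    (∀ x ∈ P, (CDC LOTZ x P = ⊤ ↔
      (∀ y ∈ P, (LOTZ x).1 ≤ (LOTZ y).1) ∨ (∀ y ∈ P, (LOTZ y).1 ≤ (LOTZ x).1))) ∧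
    (∀ x ∈ (HDCSelect (HVC LOTZ r) P).support,
      (∀ y ∈ P, onesCount x ≤ onesCount y) ∨ (∀ y ∈ P, onesCount y ≤ onesCount x)) ∧
    (∀ x ∈ (HDCSelect (CDC LOTZ) P).support,
      (∀ y ∈ P, onesCount x ≤ onesCount y) ∨ (∀ y ∈ P, onesCount y ≤ onesCount x)) := by

  classical
  have hne : P.Nonempty := Finset.card_pos.mp (by omega)
  have hn : 0 < n := by
    by_contra hn0
    push_neg at hn0
    have h1 := Finset.card_le_univ P
    have h2 : Fintype.card (BitString n) = 2 ^ n := by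
      rw [Fintype.card_fun, Fintype.card_bool, Fintype.card_fin]
    have hn' : n = 0 := Nat.le_zero.mp hn0
    subst hn'
    rw [h2] at h1
    norm_num at h1
    omega
  have hnZ : (0:ℤ) < (n:ℤ) := by exact_mod_cast hn
  have hnz : (0:ℤ) < (n:ℤ) ^ 2 := by positivity
  have hsum : ∀ x ∈ P, (LOTZ x).1 + (LOTZ x).2 = (n:ℤ) := by
    intro x hx
    have h := pareto_sum (hpar x hx)
    simp only [LOTZ]
    exact_mod_cast congrArg (fun k : ℕ => (k : ℤ)) h
  have hf1nn : ∀ x : BitString n, 0 ≤ (LOTZ x).1 := fun x => Int.natCast_nonneg _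
  have hf2nn : ∀ x : BitString n, 0 ≤ (LOTZ x).2 := fun x => Int.natCast_nonneg _
  have hinj1 : ∀ x ∈ P, ∀ y ∈ P, (LOTZ x).1 = (LOTZ y).1 → x = y := by
    intro x hx y hy h
    simp only [LOTZ] at h
    exact pareto_inj (hpar x hx) (hpar y hy) (by exact_mod_cast h)
  have key1 : ∀ x ∈ P, (∃ y ∈ P, (LOTZ y).1 < (LOTZ x).1) → (∃ y ∈ P, (LOTZ x).1 < (LOTZ y).1) →
      4 * HVC LOTZ r x P ≤ (n : ℤ) ^ 2 ∧ HVC LOTZ r x P < (n : ℤ) ^ 2 := by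
    intro x hx h1 h2
    obtain ⟨y1, hy1, hlt1⟩ := h1
    obtain ⟨y2, hy2, hlt2⟩ := h2
    have hAne : ((P.filter fun z => (LOTZ z).1 < (LOTZ x).1).image fun z => (LOTZ z).1).Nonempty :=
      ⟨(LOTZ y1).1, Finset.mem_image_of_mem _ (Finset.mem_filter.mpr ⟨hy1, hlt1⟩)⟩
    have hBne : ((P.filter fun z => (LOTZ z).2 < (LOTZ x).2).image fun z => (LOTZ z).2).Nonempty := by
      refine ⟨(LOTZ y2).2, Finset.mem_image_of_mem _ (Finset.mem_filter.mpr ⟨hy2, ?_⟩)⟩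
      have e1 := hsum x hx
      have e2 := hsum y2 hy2
      linarith
    set a := ((P.filter fun z => (LOTZ z).1 < (LOTZ x).1).image fun z => (LOTZ z).1).max' hAne with ha
    set b := ((P.filter fun z => (LOTZ z).2 < (LOTZ x).2).image fun z => (LOTZ z).2).max' hBne with hb
    have hHVC : HVC LOTZ r x P = ((LOTZ x).1 - a) * ((LOTZ x).2 - b) := by
      rw [HVC, ← Finset.coe_max' hAne, ← Finset.coe_max' hBne, WithBot.unbotD_coe,
        WithBot.unbotD_coe]
    obtain ⟨z1, hz1m, hz1e⟩ := Finset.mem_image.mp (Finset.max'_mem _ hAne)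
    obtain ⟨z2, hz2m, hz2e⟩ := Finset.mem_image.mp (Finset.max'_mem _ hBne)
    rw [← ha] at hz1e
    rw [← hb] at hz2e
    have hz1lt : a < (LOTZ x).1 := by rw [← hz1e]; exact (Finset.mem_filter.mp hz1m).2
    have hz2lt : b < (LOTZ x).2 := by rw [← hz2e]; exact (Finset.mem_filter.mp hz2m).2
    have hann : 0 ≤ a := by rw [← hz1e]; exact hf1nn z1
    have hbnn : 0 ≤ b := by rw [← hz2e]; exact hf2nn z2
    have hxsum := hsum x hx
    have hab : ((LOTZ x).1 - a) + ((LOTZ x).2 - b) ≤ (n:ℤ) := by linarith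
    have habnn : (0:ℤ) ≤ ((LOTZ x).1 - a) + ((LOTZ x).2 - b) := by linarith
    have hsq : (((LOTZ x).1 - a) + ((LOTZ x).2 - b)) * (((LOTZ x).1 - a) + ((LOTZ x).2 - b))
        ≤ (n:ℤ) * (n:ℤ) := mul_self_le_mul_self habnn hab
    constructor
    · rw [hHVC]
      nlinarith [sq_nonneg (((LOTZ x).1 - a) - ((LOTZ x).2 - b))]
    · rw [hHVC]
      nlinarith [sq_nonneg (((LOTZ x).1 - a) - ((LOTZ x).2 - b))]
  have key2 : ∀ x ∈ P, ((∀ y ∈ P, (LOTZ x).1 ≤ (LOTZ y).1) ∨ (∀ y ∈ P, (LOTZ y).1 ≤ (LOTZ x).1)) →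
      (n : ℤ) ^ 2 ≤ HVC LOTZ r x P := by
    intro x hx hc
    obtain ⟨y, hyP, hyne⟩ := Finset.exists_mem_ne (show 1 < P.card by omega) x
    rcases hc with hmin | hmax
    · have hAe : (P.filter fun z => (LOTZ z).1 < (LOTZ x).1) = ∅ := by
        apply Finset.filter_eq_empty_iff.mpr
        intro z hz
        exact not_lt.mpr (hmin z hz)
      have hylt : (LOTZ x).1 < (LOTZ y).1 :=
        lt_of_le_of_ne (hmin y hyP) (fun h => hyne (hinj1 y hyP x hx h.symm))
      have hBne : ((P.filter fun z => (LOTZ z).2 < (LOTZ x).2).image fun z => (LOTZ z).2).Nonempty := by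
        refine ⟨(LOTZ y).2, Finset.mem_image_of_mem _ (Finset.mem_filter.mpr ⟨hyP, ?_⟩)⟩
        have e1 := hsum x hx
        have e2 := hsum y hyP
        linarith
      set b := ((P.filter fun z => (LOTZ z).2 < (LOTZ x).2).image fun z => (LOTZ z).2).max' hBne with hb
      have hHVC : HVC LOTZ r x P = ((LOTZ x).1 - r.1) * ((LOTZ x).2 - b) := by
        rw [HVC, hAe, Finset.image_empty, Finset.max_empty, WithBot.unbotD_bot,
          ← Finset.coe_max' hBne, WithBot.unbotD_coe]
      obtain ⟨z2, hz2m, hz2e⟩ := Finset.mem_image.mp (Finset.max'_mem _ hBne)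
      rw [← hb] at hz2e
      have hz2lt : b < (LOTZ x).2 := by rw [← hz2e]; exact (Finset.mem_filter.mp hz2m).2
      have h1 : (n:ℤ) ^ 2 ≤ (LOTZ x).1 - r.1 := by
        have := hf1nn x
        linarith
      have h2 : (1:ℤ) ≤ (LOTZ x).2 - b := by linarith
      rw [hHVC]
      calc (n:ℤ) ^ 2 = (n:ℤ) ^ 2 * 1 := by ring
        _ ≤ ((LOTZ x).1 - r.1) * ((LOTZ x).2 - b) :=
            mul_le_mul h1 h2 (by norm_num) (by linarith)
    · have hBe : (P.filter fun z => (LOTZ z).2 < (LOTZ x).2) = ∅ := by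
        apply Finset.filter_eq_empty_iff.mpr
        intro z hz
        have e1 := hsum x hx
        have e2 := hsum z hz
        have := hmax z hz
        intro hcon
        linarith
      have hylt : (LOTZ y).1 < (LOTZ x).1 :=
        lt_of_le_of_ne (hmax y hyP) (fun h => hyne (hinj1 y hyP x hx h))
      have hAne : ((P.filter fun z => (LOTZ z).1 < (LOTZ x).1).image fun z => (LOTZ z).1).Nonempty :=
        ⟨(LOTZ y).1, Finset.mem_image_of_mem _ (Finset.mem_filter.mpr ⟨hyP, hylt⟩)⟩
      set a := ((P.filter fun z => (LOTZ z).1 < (LOTZ x).1).image fun z => (LOTZ z).1).max' hAne with ha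
      have hHVC : HVC LOTZ r x P = ((LOTZ x).1 - a) * ((LOTZ x).2 - r.2) := by
        rw [HVC, hBe, Finset.image_empty, Finset.max_empty, WithBot.unbotD_bot,
          ← Finset.coe_max' hAne, WithBot.unbotD_coe]
      obtain ⟨z1, hz1m, hz1e⟩ := Finset.mem_image.mp (Finset.max'_mem _ hAne)
      rw [← ha] at hz1e
      have hz1lt : a < (LOTZ x).1 := by rw [← hz1e]; exact (Finset.mem_filter.mp hz1m).2
      have h1 : (1:ℤ) ≤ (LOTZ x).1 - a := by linarith
      have h2 : (n:ℤ) ^ 2 ≤ (LOTZ x).2 - r.2 := by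
        have := hf2nn x
        linarith
      rw [hHVC]
      calc (n:ℤ) ^ 2 = 1 * (n:ℤ) ^ 2 := by ring
        _ ≤ ((LOTZ x).1 - a) * ((LOTZ x).2 - r.2) :=
            mul_le_mul h1 h2 (by positivity) (by linarith)
  have key3 : ∀ x ∈ P, (CDC LOTZ x P = ⊤ ↔
      (∀ y ∈ P, (LOTZ x).1 ≤ (LOTZ y).1) ∨ (∀ y ∈ P, (LOTZ y).1 ≤ (LOTZ x).1)) := by
    intro x hx
    constructor
    · intro htop
      by_contra hc
      push_neg at hc
      obtain ⟨hc1, hc2⟩ := hc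
      obtain ⟨z1, hz1, hlt1⟩ := hc1
      obtain ⟨z2, hz2, hlt2⟩ := hc2
      have hden : ∀ g : BitString n → ℤ, (∃ u ∈ P, g u < g x) → (∃ v ∈ P, g x < g v) →
          CDCobj g x P ≠ ⊤ := by
        intro g hu hv
        obtain ⟨u, huP, hult⟩ := hu
        obtain ⟨v, hvP, hvlt⟩ := hv
        have hcnot : ¬ ((∀ z ∈ P, g x ≤ g z) ∨ (∀ z ∈ P, g z ≤ g x)) := by
          push_neg
          exact ⟨⟨u, huP, hult⟩, ⟨v, hvP, hvlt⟩⟩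
        have hrw : CDCobj g x P =
            ((((P.filter fun z => g x < g z).image g).min.untopD 0 -
                (((P.filter fun z => g z < g x).image g).max.unbotD 0)).toNat : ℝ≥0∞) /
              ((((P.image g).max.unbotD 0 - ((P.image g).min.untopD 0)).toNat : ℝ≥0∞)) := by
          rw [CDCobj]
          split
          · next hcon => exact absurd hcon hcnot
          · rfl
        rw [hrw]
        have hPg : (P.image g).Nonempty := hne.image g
        have hmaxx : g x ≤ (P.image g).max' hPg :=
          Finset.le_max' _ _ (Finset.mem_image_of_mem g hx)
        have hminu : (P.image g).min' hPg ≤ g u :=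
          Finset.min'_le _ _ (Finset.mem_image_of_mem g huP)
        have hd : ((P.image g).max.unbotD 0 - (P.image g).min.untopD 0).toNat ≠ 0 := by
          rw [← Finset.coe_max' hPg, ← Finset.coe_min' hPg, WithBot.unbotD_coe,
            WithTop.untopD_coe]
          omega
        intro hEq
        rcases ENNReal.div_eq_top.mp hEq with ⟨_, h0⟩ | ⟨hT, _⟩
        · exact hd (by exact_mod_cast h0)
        · exact (ENNReal.natCast_ne_top _) hT
      have hfin1 : CDCobj (fun z => (LOTZ z).1) x P ≠ ⊤ :=
        hden _ ⟨z1, hz1, hlt1⟩ ⟨z2, hz2, hlt2⟩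
      have hfin2 : CDCobj (fun z => (LOTZ z).2) x P ≠ ⊤ := by
        apply hden
        · refine ⟨z2, hz2, ?_⟩
          have e1 := hsum x hx
          have e2 := hsum z2 hz2
          show (LOTZ z2).2 < (LOTZ x).2
          linarith
        · refine ⟨z1, hz1, ?_⟩
          have e1 := hsum x hx
          have e2 := hsum z1 hz1
          show (LOTZ x).2 < (LOTZ z1).2
          linarith
      rw [CDC] at htop
      rcases ENNReal.add_eq_top.mp htop with h | h
      · exact hfin1 h
      · exact hfin2 h
    · intro hcond
      have h1 : CDCobj (fun z => (LOTZ z).1) x P = ⊤ := by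
        rw [CDCobj]
        split
        · rfl
        · next hcon => exact absurd hcond hcon
      rw [CDC, h1, top_add]
  refine ⟨key1, key2, key3, ?_, ?_⟩
  · intro x hxs
    rw [HDCSelect, dif_pos hne, PMF.support_uniformOfFinset] at hxs
    simp only [Finset.mem_coe, Finset.mem_filter] at hxs
    obtain ⟨hxP, hmax⟩ := hxs
    have hext : (∀ y ∈ P, (LOTZ x).1 ≤ (LOTZ y).1) ∨ (∀ y ∈ P, (LOTZ y).1 ≤ (LOTZ x).1) := by
      by_contra hc
      push_neg at hc
      obtain ⟨⟨z1, hz1, h1⟩, ⟨z2, hz2, h2⟩⟩ := hc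
      have hlt := (key1 x hxP ⟨z1, hz1, h1⟩ ⟨z2, hz2, h2⟩).2
      obtain ⟨y0, hy0, hy0min⟩ := Finset.exists_min_image P (fun z => (LOTZ z).1) hne
      have hge := key2 y0 hy0 (Or.inl hy0min)
      have hle := hmax y0 hy0
      linarith
    have hoc : ∀ z ∈ P, (onesCount z : ℤ) = (LOTZ z).1 := by
      intro z hz
      simp only [LOTZ]
      exact_mod_cast pareto_onesCount (hpar z hz)
    rcases hext with h | h
    · left
      intro y hy
      have h1 := h y hy
      have e1 := hoc x hxP
      have e2 := hoc y hy
      exact_mod_cast (by linarith : (onesCount x : ℤ) ≤ (onesCount y : ℤ))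
    · right
      intro y hy
      have h1 := h y hy
      have e1 := hoc x hxP
      have e2 := hoc y hy
      exact_mod_cast (by linarith : (onesCount y : ℤ) ≤ (onesCount x : ℤ))
  · intro x hxs
    rw [HDCSelect, dif_pos hne, PMF.support_uniformOfFinset] at hxs
    simp only [Finset.mem_coe, Finset.mem_filter] at hxs
    obtain ⟨hxP, hmax⟩ := hxs
    have hext : (∀ y ∈ P, (LOTZ x).1 ≤ (LOTZ y).1) ∨ (∀ y ∈ P, (LOTZ y).1 ≤ (LOTZ x).1) := by
      apply (key3 x hxP).mp
      obtain ⟨y0, hy0, hy0min⟩ := Finset.exists_min_image P (fun z => (LOTZ z).1) hne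
      have hy0top : CDC LOTZ y0 P = ⊤ := (key3 y0 hy0).mpr (Or.inl hy0min)
      have hle := hmax y0 hy0
      rw [hy0top] at hle
      exact top_le_iff.mp hle
    have hoc : ∀ z ∈ P, (onesCount z : ℤ) = (LOTZ z).1 := by
      intro z hz
      simp only [LOTZ]
      exact_mod_cast pareto_onesCount (hpar z hz)
    rcases hext with h | h
    · left
      intro y hy
      have h1 := h y hy
      have e1 := hoc x hxP
      have e2 := hoc y hy
      exact_mod_cast (by linarith : (onesCount x : ℤ) ≤ (onesCount y : ℤ))
    · right
      intro y hy
      have h1 := h y hy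
      have e1 := hoc x hxP
      have e2 := hoc y hy
      exact_mod_cast (by linarith : (onesCount y : ℤ) ≤ (onesCount x : ℤ))


end EMO
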